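/- Let (η^k)_{k∈ℕ} be a strictly decreasing sequence of scales, i.e. lim_ω η^{k+1}_n/η^k_n = 0 for every k, and let η' be a scale that is a lower bound with lim_ω η'_n/η^k_n = 0 for every k. Then η' is not a greatest lower bound: there exists a scale η'' such that lim_ω η'_n/η''_n = 0 (so η' < η'') and lim_ω η''_n/η^k_n = 0 for every k (so η'' is still a lower bound of the family). In particular, a strictly decreasing sequence of scales admits no greatest lower bound. -/

import Mathlib

open Filter

/-- The ω-limit of a sequence in the compact space `[0,∞]`; for an ultrafilter this
equals the `limsup` along the ultrafilter. -/
noncomputable def limw (ω : Ultrafilter ℕ) (a : ℕ → ENNReal) : ENNReal :=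
  Filter.limsup a (ω : Filter ℕ)

/-- `lim_ω |z_n|^{η_n}` viewed in `[0,∞]`. -/
noncomputable def limNorm (ω : Ultrafilter ℕ) (η : ℕ → ℝ) (z : ℕ → ℂ) : ENNReal :=
  limw ω (fun n => ENNReal.ofReal (‖z n‖ ^ η n))

/-- A scale is a sequence with values in `(0,1]`. -/
def IsScale (η : ℕ → ℝ) : Prop := ∀ n, 0 < η n ∧ η n ≤ 1

/-- `lim_ω η_n / η'_n` in `[0,∞]`. -/
noncomputable def scaleRatio (ω : Ultrafilter ℕ) (η η' : ℕ → ℝ) : ENNReal :=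
  limw ω (fun n => ENNReal.ofReal (η n / η' n))

/-- `η ≤ η'` iff `lim_ω η_n/η'_n < ∞`. -/
def ScaleLE (ω : Ultrafilter ℕ) (η η' : ℕ → ℝ) : Prop := scaleRatio ω η η' ≠ ⊤

/-- `η < η'` iff `lim_ω η_n/η'_n = 0`. -/
def ScaleLT (ω : Ultrafilter ℕ) (η η' : ℕ → ℝ) : Prop := scaleRatio ω η η' = 0

/-- A scale is non-trivial if `lim_ω ε_n = 0`. -/
def NontrivialScale (ω : Ultrafilter ℕ) (ε : ℕ → ℝ) : Prop :=
  limw ω (fun n => ENNReal.ofReal (ε n)) = 0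

/-- Two scales are equivalent if `C⁻¹ η_n ≤ η'_n ≤ C η_n` ω-almost surely for some `C > 1`. -/
def ScaleEquiv (ω : Ultrafilter ℕ) (η η' : ℕ → ℝ) : Prop :=
  ∃ C : ℝ, 1 < C ∧ {n | C⁻¹ * η n ≤ η' n ∧ η' n ≤ C * η n} ∈ ω

lemma limw_eq_zero_of (ω : Ultrafilter ℕ) {a : ℕ → ENNReal}
    (h : ∀ ε : NNReal, 0 < ε → ∀ᶠ n in (ω : Filter ℕ), a n ≤ ε) : limw ω a = 0 := by
  refine le_antisymm ?_ zero_le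
  refine ENNReal.le_of_forall_pos_le_add fun ε hε _ => ?_
  rw [zero_add]
  exact limsup_le_of_le (by isBoundedDefault) (h ε hε)

lemma scaleLT_of_eventually (ω : Ultrafilter ℕ) {η η' : ℕ → ℝ}
    (h : ∀ ε : ℝ, 0 < ε → ∀ᶠ n in (ω : Filter ℕ), η n / η' n ≤ ε) : ScaleLT ω η η' := by
  apply limw_eq_zero_of
  intro ε hε
  filter_upwards [h ε (by exact_mod_cast hε)] with n hn
  calc ENNReal.ofReal (η n / η' n) ≤ ENNReal.ofReal ε := ENNReal.ofReal_le_ofReal hn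
    _ = (ε : ENNReal) := ENNReal.ofReal_coe_nnreal

lemma scaleLT_eventually (ω : Ultrafilter ℕ) {η η' : ℕ → ℝ} (h : ScaleLT ω η η')
    {ε : ℝ} (hε : 0 < ε) : ∀ᶠ n in (ω : Filter ℕ), η n / η' n < ε := by
  have h2 : Filter.limsup (fun n => ENNReal.ofReal (η n / η' n)) (ω : Filter ℕ)
      < ENNReal.ofReal ε := by
    rw [show Filter.limsup (fun n => ENNReal.ofReal (η n / η' n)) (ω : Filter ℕ)
        = scaleRatio ω η η' from rfl, h]
    simpa using hε
  filter_upwards [eventually_lt_of_limsup_lt h2] with n hn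
  by_contra hcon
  push_neg at hcon
  exact absurd hn (not_lt.2 (ENNReal.ofReal_le_ofReal hcon))

lemma div_sqrt_mul {a b : ℝ} (ha : 0 < a) (hb : 0 < b) :
    a / Real.sqrt (a * b) = Real.sqrt (a / b) := by
  rw [show a / b = a ^ 2 / (a * b) by field_simp,
    Real.sqrt_div (by positivity), Real.sqrt_sq ha.le]

lemma sqrt_mul_div {a b : ℝ} (ha : 0 < a) (hb : 0 < b) :
    Real.sqrt (a * b) / b = Real.sqrt (a / b) := by
  rw [show a / b = (a * b) / b ^ 2 by field_simp,
    Real.sqrt_div (by positivity), Real.sqrt_sq hb.le]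

lemma chain_le {ηs : ℕ → ℕ → ℝ} {n M : ℕ} (h : ∀ j < M, ηs (j + 1) n ≤ ηs j n)
    {k : ℕ} (hk : k ≤ M) : ηs M n ≤ ηs k n := by
  induction M with
  | zero => interval_cases k; exact le_rfl
  | succ M ih =>
    rcases Nat.eq_or_lt_of_le hk with rfl | hlt
    · exact le_rfl
    · exact (h M (Nat.lt_succ_self M)).trans
        (ih (fun j hj => h j (hj.trans (Nat.lt_succ_self M))) (Nat.lt_succ_iff.mp hlt))

/-- STATEMENT 13: a strictly decreasing sequence of scales has no greatest lower bound:
any lower bound `η'` (with `η' < η^k` for all `k`) is exceeded by another lower bound `η''`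
with `η' < η''`. -/
theorem stmt13 (ω : Ultrafilter ℕ) (hω : ∀ s : Set ℕ, sᶜ.Finite → s ∈ ω)
    (ηs : ℕ → ℕ → ℝ) (hηs : ∀ k, IsScale (ηs k))
    (hdec : ∀ k, ScaleLT ω (ηs (k + 1)) (ηs k))
    (η' : ℕ → ℝ) (hη' : IsScale η') (hlb : ∀ k, ScaleLT ω η' (ηs k)) :
    ∃ η'' : ℕ → ℝ, IsScale η'' ∧ ScaleLT ω η' η'' ∧ ∀ k, ScaleLT ω η'' (ηs k) := by
  classical
  set P : ℕ → ℕ → Prop := fun m n =>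
    (∀ j ≤ m, η' n / ηs j n < 1 / (m + 1)) ∧ (∀ j < m, ηs (j + 1) n ≤ ηs j n) with hP
  set K : ℕ → ℕ := fun n => Nat.findGreatest (fun m => P m n) n with hKdef
  have hA : ∀ m, ∀ᶠ n in (ω : Filter ℕ), P m n := by
    intro m
    have h1 : ∀ᶠ n in (ω : Filter ℕ), ∀ j ∈ Finset.range (m + 1),
        η' n / ηs j n < 1 / ((m : ℝ) + 1) := by
      rw [Filter.eventually_all_finset]
      exact fun j _ => scaleLT_eventually ω (hlb j) (by positivity)
    have h2 : ∀ᶠ n in (ω : Filter ℕ), ∀ j ∈ Finset.range m, ηs (j + 1) n ≤ ηs j n := by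
      rw [Filter.eventually_all_finset]
      intro j _
      filter_upwards [scaleLT_eventually ω (hdec j) one_pos] with n hn
      exact le_of_lt ((div_lt_one (hηs j n).1).mp hn)
    filter_upwards [h1, h2] with n h1 h2
    exact ⟨fun j hj => h1 j (Finset.mem_range.mpr (Nat.lt_succ_of_le hj)),
      fun j hj => h2 j (Finset.mem_range.mpr hj)⟩
  have hKey : ∀ m, ∀ᶠ n in (ω : Filter ℕ), m ≤ K n ∧ P (K n) n := by
    intro m
    have hge : ∀ᶠ n in (ω : Filter ℕ), m ≤ n :=
      hω _ (Set.Finite.subset (Set.finite_Iio m) (by intro x hx; simpa using hx))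
    filter_upwards [hA m, hge] with n hPn hn
    exact ⟨Nat.le_findGreatest hn hPn, Nat.findGreatest_spec (P := fun m => P m n) hn hPn⟩
  refine ⟨fun n => Real.sqrt (η' n * ηs (K n) n), ?_, ?_, ?_⟩
  · intro n
    have h1 := hη' n
    have h2 := hηs (K n) n
    refine ⟨Real.sqrt_pos.mpr (mul_pos h1.1 h2.1), Real.sqrt_le_one.mpr ?_⟩
    calc η' n * ηs (K n) n ≤ 1 * 1 := mul_le_mul h1.2 h2.2 h2.1.le zero_le_one
      _ = 1 := by ring
  · apply scaleLT_of_eventually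
    intro ε hε
    obtain ⟨N, hN⟩ := exists_nat_gt (1 / ε ^ 2)
    have hNε : 1 / ((N : ℝ) + 1) < ε ^ 2 := by
      rw [div_lt_iff₀ (by positivity)] at hN ⊢
      nlinarith [sq_nonneg ε]
    filter_upwards [hKey N] with n hn
    obtain ⟨hKn, hPKn⟩ := hn
    have hpos' := (hη' n).1
    have hposK := (hηs (K n) n).1
    rw [div_sqrt_mul hpos' hposK]
    have hlt : η' n / ηs (K n) n < ε ^ 2 := by
      refine lt_of_lt_of_le (hPKn.1 (K n) le_rfl) (le_trans ?_ hNε.le)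
      apply one_div_le_one_div_of_le (by positivity)
      exact_mod_cast Nat.add_le_add_right hKn 1
    have := Real.sqrt_lt_sqrt (by positivity) hlt
    rw [Real.sqrt_sq hε.le] at this
    exact this.le
  · intro k
    apply scaleLT_of_eventually
    intro ε hε
    obtain ⟨N, hN⟩ := exists_nat_gt (1 / ε ^ 2)
    have hNε : 1 / ((N : ℝ) + 1) < ε ^ 2 := by
      rw [div_lt_iff₀ (by positivity)] at hN ⊢
      nlinarith [sq_nonneg ε]
    filter_upwards [hKey (max k N)] with n hn
    obtain ⟨hKn, hPKn⟩ := hn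
    have hpos' := (hη' n).1
    have hposK := (hηs (K n) n).1
    have hposk := (hηs k n).1
    have hkK : k ≤ K n := le_trans (le_max_left k N) hKn
    have hmono : ηs (K n) n ≤ ηs k n := chain_le hPKn.2 hkK
    have hlt : η' n / ηs k n < ε ^ 2 := by
      refine lt_of_lt_of_le (hPKn.1 k hkK) (le_trans ?_ hNε.le)
      apply one_div_le_one_div_of_le (by positivity)
      have : (N : ℝ) ≤ K n := by exact_mod_cast le_trans (le_max_right k N) hKn
      linarith
    calc Real.sqrt (η' n * ηs (K n) n) / ηs k n
        ≤ Real.sqrt (η' n * ηs k n) / ηs k n :=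
          div_le_div_of_nonneg_right
            (Real.sqrt_le_sqrt (mul_le_mul_of_nonneg_left hmono hpos'.le)) hposk.le
      _ = Real.sqrt (η' n / ηs k n) := sqrt_mul_div hpos' hposk
      _ ≤ ε := by
          have := Real.sqrt_lt_sqrt (by positivity) hlt
          rw [Real.sqrt_sq hε.le] at this
          exact this.le
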